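/- The age-violation probability is strictly decreasing in the reset probability: for every integer n ≥ 1, the function ξ ↦ (1-ξ)^{⌊n/M⌋} · (1 - ξ·(1-(1-μ)^{n mod M})/σ) is strictly decreasing on the interval (0,1). -/

import Mathlib

/-- The age-violation probability is strictly decreasing in the reset
probability `ξ` on `(0,1)`. -/
theorem stmt_10 (M : ℕ) (hM : 1 ≤ M) (μ : ℝ)
    (hμ : μ ∈ Set.Ioo (0 : ℝ) 1)
    (σ : ℝ) (hσ : σ = 1 - (1 - μ) ^ M)
    (n : ℕ) (hn : 1 ≤ n) :
    StrictAntiOn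
      (fun ξ : ℝ => (1 - ξ) ^ (n / M) * (1 - ξ * (1 - (1 - μ) ^ (n % M)) / σ))
      (Set.Ioo (0 : ℝ) 1) := by
  obtain ⟨hμ0, hμ1⟩ := hμ
  have h1μ : (0:ℝ) < 1 - μ := by linarith
  have hpow : (1 - μ) ^ M < 1 := pow_lt_one₀ h1μ.le (by linarith) (by omega)
  have hσ0 : 0 < σ := by rw [hσ]; linarith
  set r := n % M with hr
  have hrM : r < M := Nat.mod_lt _ (by omega)
  have hcle : 1 - (1 - μ) ^ r ≤ σ := by
    rw [hσ]
    have : (1 - μ) ^ M ≤ (1 - μ) ^ r :=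
      pow_le_pow_of_le_one h1μ.le (by linarith) hrM.le
    linarith
  have hc0 : 0 ≤ 1 - (1 - μ) ^ r := by
    have := pow_le_one₀ h1μ.le (by linarith : (1:ℝ) - μ ≤ 1) (n := r)
    linarith
  set t := (1 - (1 - μ) ^ r) / σ with ht
  have ht0 : 0 ≤ t := div_nonneg hc0 hσ0.le
  have ht1 : t ≤ 1 := (div_le_one hσ0).mpr hcle
  intro a ha b hb hab
  obtain ⟨ha0, ha1⟩ := ha
  obtain ⟨hb0, hb1⟩ := hb
  simp only
  have key : ∀ ξ : ℝ, ξ * (1 - (1 - μ) ^ r) / σ = ξ * t := by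
    intro ξ; rw [ht, mul_div_assoc]
  rw [key, key]
  rcases Nat.eq_zero_or_pos (n / M) with hk | hk
  · have hn' : n < M := (Nat.div_eq_zero_iff.mp hk).resolve_left (by omega)
    have hrn : r = n := Nat.mod_eq_of_lt hn'
    have hc0' : 0 < 1 - (1 - μ) ^ r := by
      rw [hrn]
      have : (1 - μ) ^ n < 1 := pow_lt_one₀ h1μ.le (by linarith) (by omega)
      linarith
    have ht0' : 0 < t := div_pos hc0' hσ0
    rw [hk]
    simp only [pow_zero, one_mul]
    nlinarith
  · have hpb : 0 < 1 - b := by linarith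
    have hlt : (1 - b) ^ (n / M) < (1 - a) ^ (n / M) :=
      pow_lt_pow_left₀ (by linarith) hpb.le (by omega)
    have hppos : 0 < (1 - b) ^ (n / M) := pow_pos hpb _
    have hbt : 0 < 1 - b * t := by nlinarith
    have hmono : 1 - b * t ≤ 1 - a * t := by nlinarith
    nlinarith
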